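/- Let A be the adjacency matrix of the path P_n on vertices 1,…,n. If a + b = n + 1, then for each j ∈ {1,…,n}, the orthogonal projection E_j onto the eigenspace of the eigenvalue θ_j = 2cos(jπ/(n+1)) satisfies E_j e_a = E_j e_b when j is odd and E_j e_a = −E_j e_b when j is even. -/

import Mathlib

open Real Finset

/-- Adjacency matrix of the path `P_n`, as a real symmetric matrix:
the `(j,k)` entry is `1` iff `|j - k| = 1` (vertices `1,…,n` are indexed by `Fin n`). -/
noncomputable def pathAdjR (n : ℕ) : Matrix (Fin n) (Fin n) ℝ :=
  Matrix.of fun j k => if j.val + 1 = k.val ∨ k.val + 1 = j.val then 1 else 0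

/-- If `a + b = n + 1`, then for each `j ∈ {1,…,n}`, the orthogonal projection `E_j` onto the
eigenspace of the eigenvalue `θ_j = 2cos(jπ/(n+1))` of the adjacency matrix of `P_n` satisfies
`E_j e_a = E_j e_b` when `j` is odd, and `E_j e_a = -E_j e_b` when `j` is even. -/
lemma pathAdjR_row (n : ℕ) (v : Fin n → ℝ) (i : Fin n) :
    ∑ k, pathAdjR n i k * v k =
      (if h : i.val + 1 < n then v ⟨i.val + 1, h⟩ else 0) +
      (if h : 1 ≤ i.val then v ⟨i.val - 1, by omega⟩ else 0) := by
  have hsplit : ∀ k : Fin n, pathAdjR n i k * v k =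
      (if i.val + 1 = k.val then v k else 0) + (if k.val + 1 = i.val then v k else 0) := by
    intro k
    simp only [pathAdjR, Matrix.of_apply]
    by_cases h1 : i.val + 1 = k.val <;> by_cases h2 : k.val + 1 = i.val <;>
      simp [h1, h2] <;> omega
  rw [Finset.sum_congr rfl fun k _ => hsplit k, Finset.sum_add_distrib]
  congr 1
  · by_cases h : i.val + 1 < n
    · rw [dif_pos h]
      rw [show (∑ k, if i.val + 1 = k.val then v k else 0) =
          ∑ k, if (⟨i.val + 1, h⟩ : Fin n) = k then v k else 0 from
        Finset.sum_congr rfl fun k _ => if_congr (by simp [Fin.ext_iff]) rfl rfl]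
      simp
    · rw [dif_neg h]
      exact Finset.sum_eq_zero fun k _ => if_neg (by omega)
  · by_cases h : 1 ≤ i.val
    · rw [dif_pos h]
      rw [show (∑ k, if k.val + 1 = i.val then v k else 0) =
          ∑ k, if (⟨i.val - 1, by omega⟩ : Fin n) = k then v k else 0 from
        Finset.sum_congr rfl fun k _ => if_congr (by simp [Fin.ext_iff]; omega) rfl rfl]
      simp
    · rw [dif_neg h]
      exact Finset.sum_eq_zero fun k _ => if_neg (by omega)

lemma eigen_symm (n a b j : ℕ)
    (ha : 1 ≤ a) (ha' : a ≤ n) (hb : 1 ≤ b) (hb' : b ≤ n) (hab : a + b = n + 1)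
    (hj : 1 ≤ j) (hj' : j ≤ n)
    (v : EuclideanSpace ℝ (Fin n))
    (hv : v ∈ Module.End.eigenspace (Matrix.toEuclideanLin (pathAdjR n))
      (2 * Real.cos (j * Real.pi / (n + 1)))) :
    v ⟨b - 1, by omega⟩ = (-1 : ℝ) ^ (j + 1) * v ⟨a - 1, by omega⟩ := by
  set s : ℝ := j * Real.pi / (n + 1) with hs
  have hn1 : (0:ℝ) < (n:ℝ) + 1 := by positivity
  have hs_pos : 0 < s := by
    apply div_pos _ hn1
    have : (0:ℝ) < (j:ℝ) := by exact_mod_cast hj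
    positivity
  have hs_lt : s < Real.pi := by
    rw [hs, div_lt_iff₀ hn1]
    have hjr : (j:ℝ) ≤ (n:ℝ) := by exact_mod_cast hj'
    nlinarith [Real.pi_pos]
  have hsin : Real.sin s ≠ 0 := ne_of_gt (Real.sin_pos_of_pos_of_lt_pi hs_pos hs_lt)
  rw [Module.End.mem_eigenspace_iff] at hv
  -- the recurrence from the eigen-equation, in ℕ-indexed form
  have hrec : ∀ i : ℕ, ∀ hi : i < n,
      (if h : i + 1 < n then v ⟨i + 1, h⟩ else 0) +
      (if h : 1 ≤ i then v ⟨i - 1, by omega⟩ else 0) = (2 * Real.cos s) * v ⟨i, hi⟩ := by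
    intro i hi
    have key := congrFun (congrArg (WithLp.equiv 2 (Fin n → ℝ)) hv) ⟨i, hi⟩
    rw [show ∀ x, WithLp.equiv 2 (Fin n → ℝ) (Matrix.toEuclideanLin (pathAdjR n) x) = Matrix.toLin' (pathAdjR n) (WithLp.equiv 2 (Fin n → ℝ) x) from fun x => rfl] at key
    rw [show WithLp.equiv 2 (Fin n → ℝ) ((2 * Real.cos s) • v) = (2 * Real.cos s) • WithLp.equiv 2 (Fin n → ℝ) v from rfl] at key
    have h2 : (Matrix.toLin' (pathAdjR n)) (WithLp.equiv 2 (Fin n → ℝ) v) ⟨i, hi⟩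
        = ∑ k, pathAdjR n ⟨i, hi⟩ k * v k := by
      simp [Matrix.toLin'_apply, Matrix.mulVec, dotProduct]
    rw [h2, pathAdjR_row] at key
    exact key
  -- the Chebyshev-type closed form
  have claim : ∀ k : ℕ, ∀ hk : k < n,
      v ⟨k, hk⟩ * Real.sin s = v ⟨0, by omega⟩ * Real.sin ((k + 1) * s) := by
    intro k
    induction k using Nat.strong_induction_on with
    | _ k ih =>
      match k with
      | 0 =>
        intro hk
        norm_num
      | 1 =>
        intro hk
        have h0 := hrec 0 (by omega)
        rw [dif_pos (by omega : (0:ℕ) + 1 < n), dif_neg (by norm_num)] at h0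
        have e0 : v ⟨1, hk⟩ = 2 * Real.cos s * v ⟨0, by omega⟩ := by
          have : v ⟨0 + 1, by omega⟩ = v ⟨1, hk⟩ := rfl
          linarith [h0, this]
        have trig : Real.sin (((1:ℕ) + 1) * s) = 2 * Real.sin s * Real.cos s := by
          push_cast
          rw [show (1 + 1 : ℝ) * s = 2 * s by ring, Real.sin_two_mul]
        rw [e0, trig]
        try ring
      | (m + 2) =>
        intro hk
        have h1 := hrec (m + 1) (by omega)
        rw [dif_pos (by omega : m + 1 + 1 < n), dif_pos (by omega : 1 ≤ m + 1)] at h1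
        have e1 : v ⟨m + 2, hk⟩ = 2 * Real.cos s * v ⟨m + 1, by omega⟩ - v ⟨m, by omega⟩ := by
          have r1 : v ⟨m + 1 + 1, by omega⟩ = v ⟨m + 2, hk⟩ := rfl
          have r2 : v ⟨m + 1 - 1, by omega⟩ = v ⟨m, by omega⟩ := rfl
          linarith [h1, r1, r2]
        have i1 := ih (m + 1) (by omega) (by omega)
        have i0 := ih m (by omega) (by omega)
        have trig : Real.sin (((m : ℝ) + 2 + 1) * s)
            = 2 * Real.cos s * Real.sin (((m:ℝ) + 1 + 1) * s) - Real.sin (((m:ℝ) + 1) * s) := by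
          have h1' : ((m:ℝ) + 2 + 1) * s = ((m:ℝ) + 2) * s + s := by ring
          have h2' : ((m:ℝ) + 1) * s = ((m:ℝ) + 2) * s - s := by ring
          rw [h1', h2', Real.sin_add, Real.sin_sub]
          ring
        rw [e1]
        push_cast
        push_cast at i1 i0
        linear_combination (2 * Real.cos s) * i1 - i0 - (v ⟨0, by omega⟩) * trig
  -- apply the closed form at a-1 and b-1
  have hva := claim (a - 1) (by omega)
  have hvb := claim (b - 1) (by omega)
  have hba : ((a - 1 : ℕ) : ℝ) = (a:ℝ) - 1 := by
    push_cast [Nat.cast_sub ha]; ring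
  have hbb : ((b - 1 : ℕ) : ℝ) = (b:ℝ) - 1 := by
    push_cast [Nat.cast_sub hb]; ring
  rw [hba, show ((a:ℝ) - 1 + 1) = (a:ℝ) by ring] at hva
  rw [hbb, show ((b:ℝ) - 1 + 1) = (b:ℝ) by ring] at hvb
  -- sin(b s) = (-1)^(j+1) sin(a s)
  have hcast : (a:ℝ) + (b:ℝ) = (n:ℝ) + 1 := by exact_mod_cast hab
  have hbs : (b:ℝ) * s = (j:ℝ) * Real.pi - (a:ℝ) * s := by
    have hb' : (b:ℝ) = (n:ℝ) + 1 - (a:ℝ) := by linarith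
    rw [hb', hs]
    field_simp
  have hsinb : Real.sin ((b:ℝ) * s) = (-1:ℝ) ^ (j + 1) * Real.sin ((a:ℝ) * s) := by
    rw [hbs, Real.sin_sub, Real.sin_nat_mul_pi]
    have hcos : Real.cos ((j:ℝ) * Real.pi) = (-1:ℝ) ^ j := by
      have := Real.cos_nat_mul_pi_sub 0 j
      simpa using this
    rw [hcos, pow_succ]
    ring
  rw [hsinb] at hvb
  have hfin : v ⟨b - 1, by omega⟩ * Real.sin s
      = ((-1:ℝ) ^ (j + 1) * v ⟨a - 1, by omega⟩) * Real.sin s := by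
    rw [hvb]
    linear_combination ((-1:ℝ) ^ j) * hva
  exact mul_right_cancel₀ hsin hfin

theorem projection_parity_of_sum_eq (n : ℕ) (a b : ℕ)
    (ha : 1 ≤ a) (ha' : a ≤ n) (hb : 1 ≤ b) (hb' : b ≤ n)
    (hab : a + b = n + 1) :
    ∀ j : ℕ, 1 ≤ j → j ≤ n →
      (Odd j →
        Submodule.orthogonalProjectionOnto
            (Module.End.eigenspace (Matrix.toEuclideanLin (pathAdjR n))
              (2 * Real.cos (j * Real.pi / (n + 1))))
            (EuclideanSpace.single ⟨a - 1, by omega⟩ 1) =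
          Submodule.orthogonalProjectionOnto
            (Module.End.eigenspace (Matrix.toEuclideanLin (pathAdjR n))
              (2 * Real.cos (j * Real.pi / (n + 1))))
            (EuclideanSpace.single ⟨b - 1, by omega⟩ 1)) ∧
      (Even j →
        Submodule.orthogonalProjectionOnto
            (Module.End.eigenspace (Matrix.toEuclideanLin (pathAdjR n))
              (2 * Real.cos (j * Real.pi / (n + 1))))
            (EuclideanSpace.single ⟨a - 1, by omega⟩ 1) =
          - Submodule.orthogonalProjectionOnto
            (Module.End.eigenspace (Matrix.toEuclideanLin (pathAdjR n))
              (2 * Real.cos (j * Real.pi / (n + 1))))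
            (EuclideanSpace.single ⟨b - 1, by omega⟩ 1)) := by
  intro j hj hj'
  set W := Module.End.eigenspace (Matrix.toEuclideanLin (pathAdjR n))
      (2 * Real.cos (j * Real.pi / (n + 1))) with hW
  have key : ∀ u ∈ W, u ⟨b - 1, by omega⟩ = (-1 : ℝ) ^ (j + 1) * u ⟨a - 1, by omega⟩ :=
    fun u hu => eigen_symm n a b j ha ha' hb hb' hab hj hj' u hu
  constructor
  · intro hodd
    have hp1 : (-1 : ℝ) ^ (j + 1) = 1 := Even.neg_one_pow (by
      rcases hodd with ⟨m, hm⟩; exact ⟨m + 1, by omega⟩)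
    have hmem : (EuclideanSpace.single (⟨a - 1, by omega⟩ : Fin n) (1:ℝ)
        - EuclideanSpace.single ⟨b - 1, by omega⟩ 1) ∈ Wᗮ := by
      rw [Submodule.mem_orthogonal]
      intro u hu
      rw [inner_sub_right, EuclideanSpace.inner_single_right, EuclideanSpace.inner_single_right]
      have := key u hu
      rw [this, hp1]
      simp
    have h0 := Submodule.orthogonalProjectionOnto_apply_of_mem_orthogonal hmem
    rw [map_sub] at h0
    exact sub_eq_zero.mp h0
  · intro heven
    have hp1 : (-1 : ℝ) ^ (j + 1) = -1 := Odd.neg_one_pow (Even.add_one heven)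
    have hmem : (EuclideanSpace.single (⟨a - 1, by omega⟩ : Fin n) (1:ℝ)
        + EuclideanSpace.single ⟨b - 1, by omega⟩ 1) ∈ Wᗮ := by
      rw [Submodule.mem_orthogonal]
      intro u hu
      rw [inner_add_right, EuclideanSpace.inner_single_right, EuclideanSpace.inner_single_right]
      have := key u hu
      rw [this, hp1]
      simp
    have h0 := Submodule.orthogonalProjectionOnto_apply_of_mem_orthogonal hmem
    rw [map_add] at h0
    exact eq_neg_of_add_eq_zero_left h0
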